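/- Let G be a connected finite simple undirected graph on vertex set V, let S ⊆ V be a nonempty set of grounded nodes with complement F = V \ S nonempty, let L_g be the grounded Laplacian with smallest eigenvalue λ_1(L_g) > 0, and let γ > 0 be a real number. Then: (i) (necessity) if 1/λ_1(L_g) < γ then max_{i∈F} β_i > ⌊1/γ⌋; and (ii) (sufficiency) if min_{i∈F} β_i > ⌈1/γ⌉ then 1/λ_1(L_g) < γ. (Here 1/λ_1(L_g) is the H∞ norm of the velocity tracking error dynamics.) -/

import Mathlib

open scoped Matrix
open Finset Matrix

set_option linter.unusedSectionVars false
set_option maxHeartbeats 1000000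

section AuxSpectral
variable {n : Type*} [Fintype n] [DecidableEq n]

lemma star_mulVec_eq' {U : Matrix n n ℝ} (z : n → ℝ) : star U *ᵥ z = z ᵥ* U := by
  rw [Matrix.star_eq_conjTranspose, Matrix.conjTranspose_eq_transpose_of_trivial,
    Matrix.mulVec_transpose]

lemma herm_quad' {A : Matrix n n ℝ} (hA : A.IsHermitian) (z : n → ℝ) :
    z ⬝ᵥ (A *ᵥ z) = ∑ j, hA.eigenvalues j *
      ((star (hA.eigenvectorUnitary : Matrix n n ℝ) *ᵥ z) j) ^ 2 := by
  set U : Matrix n n ℝ := (hA.eigenvectorUnitary : Matrix n n ℝ) with hU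
  set w : n → ℝ := star U *ᵥ z with hw
  conv_lhs => rw [hA.spectral_theorem, Unitary.conjStarAlgAut_apply]
  rw [← mulVec_mulVec, ← mulVec_mulVec, Matrix.dotProduct_mulVec z U,
    ← star_mulVec_eq', ← hw]
  simp only [dotProduct, mulVec_diagonal, Function.comp_apply, RCLike.ofReal_real_eq_id, id_eq]
  refine Finset.sum_congr rfl fun j _ => by ring

lemma herm_norm' {A : Matrix n n ℝ} (hA : A.IsHermitian) (z : n → ℝ) :
    z ⬝ᵥ z = ∑ j, ((star (hA.eigenvectorUnitary : Matrix n n ℝ) *ᵥ z) j) ^ 2 := by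
  set U : Matrix n n ℝ := (hA.eigenvectorUnitary : Matrix n n ℝ) with hU
  set w : n → ℝ := star U *ᵥ z with hw
  have h1 : U * star U = 1 := (Matrix.mem_unitaryGroup_iff).mp hA.eigenvectorUnitary.2
  have h2 : star U * U = 1 := Unitary.coe_star_mul_self hA.eigenvectorUnitary
  have h3 : z = U *ᵥ w := by rw [hw, mulVec_mulVec, h1, one_mulVec]
  conv_lhs => rw [h3]
  rw [Matrix.dotProduct_mulVec, ← star_mulVec_eq', mulVec_mulVec, h2, one_mulVec]
  simp only [dotProduct]
  exact Finset.sum_congr rfl fun j _ => by ring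

lemma rayleigh_iInf_le' {A : Matrix n n ℝ} [Nonempty n] (hA : A.IsHermitian) (z : n → ℝ) :
    (⨅ j, hA.eigenvalues j) * (z ⬝ᵥ z) ≤ z ⬝ᵥ (A *ᵥ z) := by
  rw [herm_quad' hA z, herm_norm' hA z, Finset.mul_sum]
  refine Finset.sum_le_sum fun j _ => ?_
  have h1 : (⨅ j, hA.eigenvalues j) ≤ hA.eigenvalues j :=
    ciInf_le (Finite.bddBelow_range _) j
  nlinarith [sq_nonneg ((star (hA.eigenvectorUnitary : Matrix n n ℝ) *ᵥ z) j)]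

lemma le_eigenvalues_of_quad' {A : Matrix n n ℝ} (hA : A.IsHermitian) {m : ℝ}
    (h : ∀ z : n → ℝ, m * (z ⬝ᵥ z) ≤ z ⬝ᵥ (A *ᵥ z)) (j : n) :
    m ≤ hA.eigenvalues j := by
  set U : Matrix n n ℝ := (hA.eigenvectorUnitary : Matrix n n ℝ) with hU
  have h2 : star U * U = 1 := Unitary.coe_star_mul_self hA.eigenvectorUnitary
  set z : n → ℝ := U *ᵥ Pi.single j 1 with hz
  have hwz : star U *ᵥ z = Pi.single j 1 := by
    rw [hz, mulVec_mulVec, h2, one_mulVec]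
  have hq := h z
  rw [herm_quad' hA z, herm_norm' hA z, hwz] at hq
  simp only [Pi.single_apply] at hq
  calc m = m * ∑ i, ((if i = j then (1:ℝ) else 0)) ^ 2 := by
        simp [Finset.sum_ite_eq', if_pos (Finset.mem_univ j)]
    _ ≤ ∑ i, hA.eigenvalues i * ((if i = j then (1:ℝ) else 0)) ^ 2 := hq
    _ = hA.eigenvalues j := by
        simp [ite_pow, mul_ite, Finset.sum_ite_eq', if_pos (Finset.mem_univ j)]

end AuxSpectral

/-- The grounded Laplacian: the principal submatrix of the Laplacian of `G`
obtained by deleting the rows and columns indexed by the grounded set `S`. -/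
noncomputable def groundedLaplacian {V : Type*} [Fintype V] [DecidableEq V]
    (G : SimpleGraph V) [DecidableRel G.Adj] (S : Finset V) :
    Matrix {v : V // v ∉ S} {v : V // v ∉ S} ℝ :=
  (G.lapMatrix ℝ).submatrix (fun i => (i : V)) (fun j => (j : V))

section AuxGraph
variable {V : Type*} [Fintype V] [DecidableEq V]

/-- zero extension of a vector on the complement of `S`. -/
def ext0' (S : Finset V) (x : {v : V // v ∉ S} → ℝ) : V → ℝ :=
  fun v => if h : v ∈ S then 0 else x ⟨v, h⟩

lemma sum_compl_subtype' (S : Finset V) (f : V → ℝ) (hf : ∀ v ∈ S, f v = 0) :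
    ∑ i : {v : V // v ∉ S}, f i = ∑ v, f v := by
  rw [← Finset.sum_subtype Sᶜ (fun v => Finset.mem_compl) f]
  exact Finset.sum_subset (Finset.subset_univ _)
    (fun v _ hv => hf v (by simpa using hv))

variable (G : SimpleGraph V) [DecidableRel G.Adj] (S : Finset V)

lemma card_inter_eq_filter' (v : V) :
    (G.neighborFinset v ∩ S) = S.filter (G.Adj v) := by
  ext u; simp [SimpleGraph.mem_neighborFinset, and_comm]

lemma mulVec_ground' (x : {v : V // v ∉ S} → ℝ) (i : {v : V // v ∉ S}) :
    (groundedLaplacian G S *ᵥ x) i = (G.lapMatrix ℝ *ᵥ ext0' S x) (i : V) := by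
  simp only [groundedLaplacian, mulVec, dotProduct, submatrix_apply]
  rw [← sum_compl_subtype' S (fun u => G.lapMatrix ℝ (i : V) u * ext0' S x u)
    (fun v hv => by simp [ext0', dif_pos hv])]
  exact Finset.sum_congr rfl fun j _ => by simp [ext0', dif_neg j.2]

lemma quad_ground' (x : {v : V // v ∉ S} → ℝ) :
    x ⬝ᵥ (groundedLaplacian G S *ᵥ x) = (ext0' S x) ⬝ᵥ (G.lapMatrix ℝ *ᵥ ext0' S x) := by
  rw [dotProduct, dotProduct,
    ← sum_compl_subtype' S (fun v => ext0' S x v * (G.lapMatrix ℝ *ᵥ ext0' S x) v)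
      (fun v hv => by simp [ext0', dif_pos hv])]
  exact Finset.sum_congr rfl fun i _ => by
    rw [mulVec_ground']; simp [ext0', dif_neg i.2]

/-- row sums of the grounded Laplacian are the `β i`. -/
lemma ground_rowsum' (i : {v : V // v ∉ S}) :
    (groundedLaplacian G S *ᵥ (fun _ => (1:ℝ))) i
      = ((G.neighborFinset (i : V) ∩ S).card : ℝ) := by
  simp only [groundedLaplacian, mulVec, dotProduct, submatrix_apply, mul_one]
  have h0 : ∑ u : V, G.lapMatrix ℝ (i : V) u = 0 := by
    have := congrFun (G.lapMatrix_mulVec_const_eq_zero (R := ℝ)) (i : V)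
    simpa [mulVec, dotProduct] using this
  have hsub : ∑ j : {v : V // v ∉ S}, G.lapMatrix ℝ (i : V) (j : V)
      = ∑ u ∈ Sᶜ, G.lapMatrix ℝ (i : V) u :=
    (Finset.sum_subtype Sᶜ (fun v => Finset.mem_compl) _).symm
  have hsplit : ∑ u ∈ S, G.lapMatrix ℝ (i : V) u
      + ∑ u ∈ Sᶜ, G.lapMatrix ℝ (i : V) u = 0 := by
    rw [Finset.sum_add_sum_compl]; exact h0
  have hS : ∑ u ∈ S, G.lapMatrix ℝ (i : V) u
      = -((G.neighborFinset (i : V) ∩ S).card : ℝ) := by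
    have : ∀ u ∈ S, G.lapMatrix ℝ (i : V) u = -(if G.Adj (i : V) u then (1:ℝ) else 0) := by
      intro u hu
      have hne : (i : V) ≠ u := fun h => i.2 (h ▸ hu)
      simp [SimpleGraph.lapMatrix, SimpleGraph.degMatrix, Matrix.diagonal_apply_ne _ hne,
        SimpleGraph.adjMatrix_apply]
    rw [Finset.sum_congr rfl this, Finset.sum_neg_distrib, Finset.sum_boole,
      card_inter_eq_filter']
  rw [hsub]
  linarith [hsplit, hS]

lemma block_sum' (y : V → ℝ) (hy : ∀ v ∈ S, y v = 0) :
    ∑ i ∈ Sᶜ, ∑ j ∈ S, (if G.Adj i j then (y i - y j)^2 else 0)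
      = ∑ i ∈ Sᶜ, ((G.neighborFinset i ∩ S).card : ℝ) * y i ^ 2 := by
  refine Finset.sum_congr rfl fun i _ => ?_
  have : ∀ j ∈ S, (if G.Adj i j then (y i - y j)^2 else 0)
      = (if G.Adj i j then (1:ℝ) else 0) * y i ^ 2 := by
    intro j hj
    rw [hy j hj]
    split_ifs with h
    · ring
    · ring
  rw [Finset.sum_congr rfl this, ← Finset.sum_mul, Finset.sum_boole, card_inter_eq_filter']

lemma quad_lower' (x : {v : V // v ∉ S} → ℝ) :
    ∑ i : {v : V // v ∉ S}, ((G.neighborFinset (i : V) ∩ S).card : ℝ) * x i ^ 2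
      ≤ x ⬝ᵥ (groundedLaplacian G S *ᵥ x) := by
  rw [quad_ground', ← Matrix.toLinearMap₂'_apply', SimpleGraph.lapMatrix_toLinearMap₂']
  set y := ext0' S x with hy
  have hy0 : ∀ v ∈ S, y v = 0 := fun v hv => by simp [hy, ext0', dif_pos hv]
  set t : V → V → ℝ := fun i j => if G.Adj i j then (y i - y j)^2 else 0 with ht
  have htnn : ∀ i j, 0 ≤ t i j := fun i j => by
    simp only [ht]
    split_ifs
    · positivity
    · exact le_refl 0
  have hsym : ∀ i j, t i j = t j i := fun i j => by
    simp only [ht]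
    rw [if_congr (G.adj_comm i j) rfl rfl]
    split_ifs
    · ring
    · rfl
  have hb1 : ∑ i ∈ Sᶜ, ∑ j ∈ S, t i j
      = ∑ i ∈ Sᶜ, ((G.neighborFinset i ∩ S).card : ℝ) * y i ^ 2 := block_sum' G S y hy0
  have hb2 : ∑ i ∈ S, ∑ j ∈ Sᶜ, t i j = ∑ i ∈ Sᶜ, ∑ j ∈ S, t i j := by
    rw [Finset.sum_comm]
    exact Finset.sum_congr rfl fun i _ => Finset.sum_congr rfl fun j _ => hsym j i
  have hmain : ∑ i : V, ∑ j : V, t i j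
      ≥ 2 * ∑ i ∈ Sᶜ, ((G.neighborFinset i ∩ S).card : ℝ) * y i ^ 2 := by
    have hexp : ∑ i : V, ∑ j : V, t i j
        = ∑ i : V, ∑ j ∈ S, t i j + ∑ i : V, ∑ j ∈ Sᶜ, t i j := by
      rw [← Finset.sum_add_distrib]
      exact Finset.sum_congr rfl fun i _ => (Finset.sum_add_sum_compl S _).symm
    have h1 : ∑ i ∈ Sᶜ, ∑ j ∈ S, t i j ≤ ∑ i : V, ∑ j ∈ S, t i j :=
      Finset.sum_le_sum_of_subset_of_nonneg (Finset.subset_univ _)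
        (fun i _ _ => Finset.sum_nonneg fun j _ => htnn i j)
    have h2 : ∑ i ∈ S, ∑ j ∈ Sᶜ, t i j ≤ ∑ i : V, ∑ j ∈ Sᶜ, t i j :=
      Finset.sum_le_sum_of_subset_of_nonneg (Finset.subset_univ _)
        (fun i _ _ => Finset.sum_nonneg fun j _ => htnn i j)
    rw [hexp]
    linarith [hb1, hb2]
  have hfin : ∑ i : {v : V // v ∉ S}, ((G.neighborFinset (i : V) ∩ S).card : ℝ) * x i ^ 2
      = ∑ i ∈ Sᶜ, ((G.neighborFinset i ∩ S).card : ℝ) * y i ^ 2 := by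
    rw [Finset.sum_subtype Sᶜ (fun v => Finset.mem_compl)
      (fun v => ((G.neighborFinset v ∩ S).card : ℝ) * y v ^ 2)]
    exact Finset.sum_congr rfl fun i _ => by simp [hy, ext0', dif_neg i.2]
  rw [hfin]
  linarith [hmain]

end AuxGraph

/-- let `1/λ₁(L_g)` be the `H∞` norm of the velocity tracking dynamics.
(i) Necessity: if `1/λ₁(L_g) < γ` then `max_{i∈F} β_i > ⌊1/γ⌋`.
(ii) Sufficiency: if `min_{i∈F} β_i > ⌈1/γ⌉` then `1/λ₁(L_g) < γ`. -/
theorem hinf_norm_velocity_tracking_conditions {V : Type*} [Fintype V] [DecidableEq V]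
    (G : SimpleGraph V) [DecidableRel G.Adj] (hconn : G.Connected)
    (S : Finset V) (hS : S.Nonempty) (hF : Sᶜ.Nonempty)
    (hsym : (groundedLaplacian G S).IsHermitian)
    (hpos : 0 < ⨅ j, hsym.eigenvalues j) (γ : ℝ) (hγ : 0 < γ) :
    (1 / (⨅ j, hsym.eigenvalues j) < γ →
      Sᶜ.sup' hF (fun i => (G.neighborFinset i ∩ S).card) > ⌊1/γ⌋₊) ∧
    (Sᶜ.inf' hF (fun i => (G.neighborFinset i ∩ S).card) > ⌈1/γ⌉₊ →
      1 / (⨅ j, hsym.eigenvalues j) < γ) := by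
  classical
  have hF' := hF
  obtain ⟨v₀, hv₀⟩ := hF'
  haveI : Nonempty {v : V // v ∉ S} := ⟨⟨v₀, Finset.mem_compl.mp hv₀⟩⟩
  set lam : ℝ := ⨅ j, hsym.eigenvalues j with hlam
  set β : V → ℕ := fun i => (G.neighborFinset i ∩ S).card with hβ
  have hcard : (0:ℝ) < (Fintype.card {v : V // v ∉ S} : ℝ) := by
    exact_mod_cast Fintype.card_pos
  -- upper bound : lam ≤ max β
  have hup : lam ≤ ((Sᶜ.sup' hF β : ℕ) : ℝ) := by
    set ones : {v : V // v ∉ S} → ℝ := fun _ => 1 with hones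
    have hdot : ones ⬝ᵥ ones = (Fintype.card {v : V // v ∉ S} : ℝ) := by
      simp [hones, dotProduct, Finset.card_univ]
    have hquad : ones ⬝ᵥ (groundedLaplacian G S *ᵥ ones)
        = ∑ i : {v : V // v ∉ S}, (β (i : V) : ℝ) := by
      rw [dotProduct]
      exact Finset.sum_congr rfl fun i _ => by
        rw [hones]; simpa using ground_rowsum' G S i
    have hray := rayleigh_iInf_le' hsym ones
    rw [hdot, hquad] at hray
    have hle : ∑ i : {v : V // v ∉ S}, (β (i : V) : ℝ)
        ≤ (Fintype.card {v : V // v ∉ S} : ℝ) * ((Sᶜ.sup' hF β : ℕ) : ℝ) := by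
      rw [← nsmul_eq_mul, ← Finset.card_univ, ← Finset.sum_const]
      refine Finset.sum_le_sum fun i _ => ?_
      exact_mod_cast Finset.le_sup' β (Finset.mem_compl.mpr i.2)
    have hfinal := le_trans hray hle
    exact le_of_mul_le_mul_right (by linarith [hfinal]) hcard
  -- lower bound : min β ≤ lam
  have hlow : ((Sᶜ.inf' hF β : ℕ) : ℝ) ≤ lam := by
    refine le_ciInf (le_eigenvalues_of_quad' hsym ?_)
    intro z
    have h1 : ((Sᶜ.inf' hF β : ℕ) : ℝ) * (z ⬝ᵥ z)
        ≤ ∑ i : {v : V // v ∉ S}, (β (i : V) : ℝ) * z i ^ 2 := by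
      rw [dotProduct, Finset.mul_sum]
      refine Finset.sum_le_sum fun i _ => ?_
      have hb : ((Sᶜ.inf' hF β : ℕ) : ℝ) ≤ (β (i : V) : ℝ) := by
        exact_mod_cast Finset.inf'_le β (Finset.mem_compl.mpr i.2)
      nlinarith [sq_nonneg (z i), sq_abs (z i)]
    exact le_trans h1 (quad_lower' G S z)
  constructor
  · intro h
    have hglam : 1 / γ < lam := by
      have h1 : 1 < γ * lam := by
        have := (div_lt_iff₀ hpos).mp h
        linarith [this, mul_comm lam γ]
      rw [div_lt_iff₀ hγ]
      linarith [mul_comm lam γ]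
    have hfl : ((⌊1/γ⌋₊ : ℕ) : ℝ) < ((Sᶜ.sup' hF β : ℕ) : ℝ) := by
      have := Nat.floor_le (le_of_lt (by positivity : (0:ℝ) < 1/γ))
      linarith [hup, hglam, this]
    exact_mod_cast hfl
  · intro h
    have hcl : ((⌈1/γ⌉₊ : ℕ) : ℝ) + 1 ≤ ((Sᶜ.inf' hF β : ℕ) : ℝ) := by
      exact_mod_cast Nat.succ_le_of_lt h
    have hceil : (1:ℝ)/γ ≤ ((⌈1/γ⌉₊ : ℕ) : ℝ) := Nat.le_ceil _
    have hglam : 1 / γ < lam := by linarith [hlow]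
    rw [div_lt_iff₀ hpos]
    have h1 : 1 < lam * γ := by
      have := (div_lt_iff₀ hγ).mp hglam
      linarith [this]
    linarith [mul_comm γ lam, h1]
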